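/- Let γ ≥ 1 and δ ∈ [0,1], let ρ and σ be states on ℂ^n, and let 𝓜 be a set of measurement operators (each M ∈ 𝓜 satisfies 0 ≤ M ≤ I) whose symmetrized set 𝓜₂ is nonempty. If E_γ^𝓜(ρ‖σ) ≤ δ and E_γ^𝓜(σ‖ρ) ≤ δ, then E_1^𝓜(ρ‖σ) ≤ (γ − 1 + 2δ)/(γ + 1). -/

import Mathlib

noncomputable section
open Matrix ComplexOrder

/-- Square complex matrices of size `n`. -/
abbrev Mat (n : ℕ) := Matrix (Fin n) (Fin n) ℂ

/-- A quantum state: positive semidefinite with unit trace. -/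
def IsState {n : ℕ} (ρ : Mat n) : Prop := ρ.PosSemidef ∧ ρ.trace = 1

/-- The symmetrized measurement set 𝓜₂ := {M ∈ 𝓜 : I − M ∈ 𝓜}. -/
def M2 {n : ℕ} (𝓜 : Set (Mat n)) : Set (Mat n) := {M | M ∈ 𝓜 ∧ (1 - M) ∈ 𝓜}

/-- Measured hockey-stick divergence for γ ≥ 1:
`E_γ^𝓜(ρ‖σ) = sup_{M ∈ 𝓜₂} Tr[M(ρ − γσ)]`. -/
def Emeas {n : ℕ} (γ : ℝ) (𝓜 : Set (Mat n)) (ρ σ : Mat n) : ℝ :=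
  sSup ((fun M => ((M * (ρ - (γ : ℂ) • σ)).trace).re) '' M2 𝓜)

lemma psd_trace_re_nonneg {n : ℕ} {A : Mat n} (hA : A.PosSemidef) : 0 ≤ A.trace.re := by
  have h : 0 ≤ A.trace := hA.trace_nonneg
  simpa using (Complex.le_def.mp h).1

open scoped MatrixOrder in
lemma psd_trace_mul_re_nonneg {n : ℕ} {A B : Mat n} (hA : A.PosSemidef) (hB : B.PosSemidef) :
    0 ≤ ((A * B).trace).re := by
  have h2 : (A * B).trace = ((CFC.sqrt B) * A * (CFC.sqrt B)).trace := by
    conv_lhs => rw [← CFC.sqrt_mul_sqrt_self B hB.nonneg, ← Matrix.mul_assoc, Matrix.trace_mul_cycle]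
  have hps : ((CFC.sqrt B) * A * (CFC.sqrt B)).PosSemidef := by
    have := hA.mul_mul_conjTranspose_same (CFC.sqrt B)
    rwa [(CFC.sqrt_nonneg B).posSemidef.1] at this
  rw [h2]
  exact psd_trace_re_nonneg hps

/-- Linearity of the divergence integrand. -/
lemma emeas_term {n : ℕ} (γ : ℝ) (M ρ σ : Mat n) :
    ((M * (ρ - (γ : ℂ) • σ)).trace).re
      = ((M * ρ).trace).re - γ * ((M * σ).trace).re := by
  rw [Matrix.mul_sub, Matrix.trace_sub, Matrix.mul_smul, Matrix.trace_smul]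
  simp [Complex.sub_re, Complex.smul_re]

/-- Contraction of the measured trace distance under restricted QLDP constraints. -/
theorem stmt_11 {n : ℕ} (γ δ : ℝ) (hγ : 1 ≤ γ) (hδ : δ ∈ Set.Icc (0 : ℝ) 1)
    (ρ σ : Mat n) (hρ : IsState ρ) (hσ : IsState σ) (𝓜 : Set (Mat n))
    (h𝓜 : ∀ M ∈ 𝓜, M.PosSemidef ∧ ((1 : Mat n) - M).PosSemidef)
    (hne : (M2 𝓜).Nonempty)
    (h₁ : Emeas γ 𝓜 ρ σ ≤ δ) (h₂ : Emeas γ 𝓜 σ ρ ≤ δ) :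
    Emeas 1 𝓜 ρ σ ≤ (γ - 1 + 2 * δ) / (γ + 1) := by
  obtain ⟨hδ0, hδ1⟩ := hδ
  -- basic bounds on Tr[M τ] for M ∈ 𝓜 and states τ
  have key : ∀ M ∈ M2 𝓜, ∀ τ : Mat n, IsState τ →
      0 ≤ ((M * τ).trace).re ∧ ((M * τ).trace).re ≤ 1 := by
    intro M hM τ hτ
    obtain ⟨hMp, hMc⟩ := h𝓜 M hM.1
    constructor
    · exact psd_trace_mul_re_nonneg hMp hτ.1
    · have h := psd_trace_mul_re_nonneg hMc hτ.1
      have : (((1 : Mat n) - M) * τ).trace = τ.trace - (M * τ).trace := by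
        rw [Matrix.sub_mul, Matrix.one_mul, Matrix.trace_sub]
      rw [this, hτ.2] at h
      simp only [Complex.sub_re, Complex.one_re] at h
      linarith
  -- boundedness of the divergence sets
  have bdd : ∀ γ' : ℝ, ∀ ρ' σ' : Mat n, IsState ρ' → IsState σ' → 0 ≤ γ' →
      BddAbove ((fun M => ((M * (ρ' - (γ' : ℂ) • σ')).trace).re) '' M2 𝓜) := by
    intro γ' ρ' σ' hρ' hσ' hγ'
    refine ⟨1, ?_⟩
    rintro v ⟨M, hM, rfl⟩
    simp only [emeas_term]
    have h1 := key M hM ρ' hρ'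
    have h2 := key M hM σ' hσ'
    nlinarith [h1.1, h1.2, h2.1, h2.2]
  have hγ0 : (0:ℝ) ≤ γ := by linarith
  -- elementwise bound
  have helt : ∀ M ∈ M2 𝓜,
      ((M * (ρ - ((1:ℝ) : ℂ) • σ)).trace).re ≤ (γ - 1 + 2 * δ) / (γ + 1) := by
    intro M hM
    have hM' : (1 - M) ∈ M2 𝓜 := by
      constructor
      · exact hM.2
      · simpa using hM.1
    -- first constraint: Tr[M(ρ - γσ)] ≤ δ
    have c1 : ((M * ρ).trace).re - γ * ((M * σ).trace).re ≤ δ := by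
      have h : ((fun M => ((M * (ρ - (γ : ℂ) • σ)).trace).re) M) ≤ δ :=
        (le_csSup (bdd γ ρ σ hρ hσ hγ0) ⟨M, hM, rfl⟩).trans h₁
      simpa only [emeas_term] using h
    -- second constraint: Tr[(1-M)(σ - γρ)] ≤ δ
    have c2 : (((1 - M) * σ).trace).re - γ * (((1 - M) * ρ).trace).re ≤ δ := by
      have h : ((fun M => ((M * (σ - (γ : ℂ) • ρ)).trace).re) (1 - M)) ≤ δ :=
        (le_csSup (bdd γ σ ρ hσ hρ hγ0) ⟨1 - M, hM', rfl⟩).trans h₂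
      simpa only [emeas_term] using h
    have e1 : (((1 - M) : Mat n) * σ).trace = σ.trace - (M * σ).trace := by
      rw [Matrix.sub_mul, Matrix.one_mul, Matrix.trace_sub]
    have e2 : (((1 - M) : Mat n) * ρ).trace = ρ.trace - (M * ρ).trace := by
      rw [Matrix.sub_mul, Matrix.one_mul, Matrix.trace_sub]
    rw [e1, e2, hρ.2, hσ.2] at c2
    simp only [Complex.sub_re, Complex.one_re] at c2
    simp only [emeas_term]
    rw [le_div_iff₀ (by linarith : (0:ℝ) < γ + 1)]
    nlinarith [c1, c2]
  -- conclude via supremum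
  apply Real.sSup_le
  · rintro v ⟨M, hM, rfl⟩
    exact helt M hM
  · apply div_nonneg <;> linarith
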